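/- Let f(y|μ,φ) = c(y,φ)exp(−D(y,μ)/(2φ)) be the density of a GLM sample in mean-value parametrization, with D(y,μ) = D₁(y) + D₂(y,μ) and E[D₂(Y,μ)] = D₂(E[Y],μ). Then for fixed φ, the entropic risk R(β,φ) = E[log(f(Y|μ₀,φ₀)/f(Y|μ,φ))] with μ = G⁻¹(Xβ) differs from (1/(2φ))D₂(E[Y], G⁻¹(Xβ)) by a quantity not depending on β; hence argmin_β R(β,φ) = argmin_β D₂(E[Y], G⁻¹(Xβ)). -/

import Mathlib

open MeasureTheory

/-- For fixed `φ`, the entropic risk `R(β,φ)` of a GLM differs from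
`(1/(2φ)) D₂(E[Y], G⁻¹(Xβ))` by a constant not depending on `β`; hence minimizing
`R(·,φ)` is equivalent to minimizing `D₂(E[Y], G⁻¹(X·))`. -/
theorem glm_entropic_risk_reduction
    {α : Type*} [MeasurableSpace α] (P : Measure α) [IsProbabilityMeasure P]
    (m p : ℕ)
    (C : (Fin m → ℝ) → ℝ → ℝ)
    (D D2 : (Fin m → ℝ) → (Fin m → ℝ) → ℝ) (D1 : (Fin m → ℝ) → ℝ)
    (hdec : ∀ y μ, D y μ = D1 y + D2 y μ)
    (f : (Fin m → ℝ) → (Fin m → ℝ) → ℝ → ℝ)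
    (hf : ∀ y μ φ', f y μ φ' = C y φ' * Real.exp (-(D y μ) / (2 * φ')))
    (Yv : α → Fin m → ℝ) (μ0 : α → Fin m → ℝ) (φ0 : α → ℝ)
    (φ : ℝ) (hφ : 0 < φ)
    (hCpos : ∀ y φ', 0 < C y φ')
    (hfpos : ∀ ω, 0 < f (Yv ω) (μ0 ω) (φ0 ω))
    (EY : Fin m → ℝ) (hEY : ∀ i, EY i = ∫ ω, Yv ω i ∂P)
    (haff : ∀ μ, ∫ ω, D2 (Yv ω) μ ∂P = D2 EY μ)
    (hint0 : Integrable (fun ω => Real.log (f (Yv ω) (μ0 ω) (φ0 ω))) P)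
    (hintC : Integrable (fun ω => Real.log (C (Yv ω) φ)) P)
    (hintD1 : Integrable (fun ω => D1 (Yv ω)) P)
    (hintD2 : ∀ μ, Integrable (fun ω => D2 (Yv ω) μ) P)
    (Ginv : (Fin m → ℝ) → Fin m → ℝ) (X : Matrix (Fin m) (Fin (p + 1)) ℝ)
    (R : (Fin (p + 1) → ℝ) → ℝ)
    (hR : ∀ β, R β = ∫ ω, Real.log
        (f (Yv ω) (μ0 ω) (φ0 ω) / f (Yv ω) (Ginv (X.mulVec β)) φ) ∂P) :
    ∃ K : ℝ,
      (∀ β, R β = K + (1 / (2 * φ)) * D2 EY (Ginv (X.mulVec β))) ∧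
      (∀ β β', R β ≤ R β' ↔
        D2 EY (Ginv (X.mulVec β)) ≤ D2 EY (Ginv (X.mulVec β'))) := by

  have hRkey : ∀ β, R β = (∫ ω, Real.log (f (Yv ω) (μ0 ω) (φ0 ω)) ∂P
      - ∫ ω, Real.log (C (Yv ω) φ) ∂P
      + (1 / (2 * φ)) * ∫ ω, D1 (Yv ω) ∂P)
      + (1 / (2 * φ)) * D2 EY (Ginv (X.mulVec β)) := by
    intro β
    set μ := Ginv (X.mulVec β) with hμ
    have hlog : ∀ ω, Real.log
        (f (Yv ω) (μ0 ω) (φ0 ω) / f (Yv ω) μ φ)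
        = Real.log (f (Yv ω) (μ0 ω) (φ0 ω)) - Real.log (C (Yv ω) φ)
          + (1 / (2 * φ)) * D1 (Yv ω) + (1 / (2 * φ)) * D2 (Yv ω) μ := by
      intro ω
      have hfβ : f (Yv ω) μ φ = C (Yv ω) φ * Real.exp (-(D (Yv ω) μ) / (2 * φ)) :=
        hf _ _ _
      have hfβpos : 0 < f (Yv ω) μ φ := by
        rw [hfβ]; exact mul_pos (hCpos _ _) (Real.exp_pos _)
      rw [Real.log_div (ne_of_gt (hfpos ω)) (ne_of_gt hfβpos), hfβ,
        Real.log_mul (ne_of_gt (hCpos _ _)) (Real.exp_ne_zero _),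
        Real.log_exp, hdec]
      field_simp
      ring
    rw [hR β]
    simp only [← hμ, hlog]
    have h1 : Integrable (fun ω => Real.log (f (Yv ω) (μ0 ω) (φ0 ω))
        - Real.log (C (Yv ω) φ) + (1 / (2 * φ)) * D1 (Yv ω)) P :=
      (hint0.sub hintC).add (hintD1.const_mul _)
    have h2 : Integrable (fun ω => (1 / (2 * φ)) * D2 (Yv ω) μ) P :=
      (hintD2 μ).const_mul _
    have h3 : Integrable (fun ω => Real.log (f (Yv ω) (μ0 ω) (φ0 ω))
        - Real.log (C (Yv ω) φ)) P := hint0.sub hintC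
    have h4 : Integrable (fun ω => (1 / (2 * φ)) * D1 (Yv ω)) P :=
      hintD1.const_mul _
    rw [integral_add h1 h2, integral_add h3 h4, integral_sub hint0 hintC,
      MeasureTheory.integral_const_mul, MeasureTheory.integral_const_mul, haff]
  refine ⟨_, hRkey, fun β β' => ?_⟩
  rw [hRkey β, hRkey β']
  have h2φ : 0 < 1 / (2 * φ) := by positivity
  rw [add_le_add_iff_left, mul_le_mul_iff_right₀ h2φ]
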